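/- Let f be a continuous, non-increasing probability density on [0,1] with cdf F, let q > 0, and suppose t_q ∈ (0,1) satisfies f(t_q) = 1/q and F(t_q) > t_q·f(t_q). Set q′ = t_q / F(t_q). Then t_q = max{t ∈ [0,1] : F(t) ≥ t/q′}; that is, the population Benjamini–Hochberg threshold at level q′ coincides with the population SL threshold t_q. -/

import Mathlib

open MeasureTheory

/-- Let `f` be a continuous, non-increasing probability density on
`[0,1]` with cdf `F`, let `q > 0`, and suppose `t_q ∈ (0,1)` satisfies `f(t_q) = 1/q`
and `F(t_q) > t_q f(t_q)`. Setting `q' = t_q / F(t_q)`, the population BH threshold at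
level `q'` coincides with the population SL threshold:
`t_q = max{t ∈ [0,1] : F(t) ≥ t/q'}`. -/
theorem stmt11 (f : ℝ → ℝ) (hcont : ContinuousOn f (Set.Icc 0 1))
    (hmono : AntitoneOn f (Set.Icc 0 1)) (hnn : ∀ u, 0 ≤ f u)
    (hint : ∫ u in Set.Icc (0:ℝ) 1, f u = 1)
    (F : ℝ → ℝ) (hF : ∀ t, F t = ∫ u in (0:ℝ)..t, f u)
    (q : ℝ) (hq : 0 < q) (tq : ℝ) (htq : tq ∈ Set.Ioo (0:ℝ) 1)
    (hftq : f tq = 1 / q) (hgt : tq * f tq < F tq) :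
    IsGreatest {t ∈ Set.Icc (0:ℝ) 1 | t / (tq / F tq) ≤ F t} tq := by
  obtain ⟨htq0, htq1⟩ := htq
  have hftqpos : 0 < f tq := by rw [hftq]; positivity
  have hFtqpos : 0 < F tq := lt_trans (by positivity) hgt
  have hInt : ∀ a b : ℝ, a ∈ Set.Icc (0:ℝ) 1 → b ∈ Set.Icc (0:ℝ) 1 →
      IntervalIntegrable f volume a b := fun a b ha hb =>
    (hcont.mono (Set.uIcc_subset_Icc ha hb)).intervalIntegrable
  have htqmem : tq ∈ Set.Icc (0:ℝ) 1 := ⟨htq0.le, htq1.le⟩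
  constructor
  · refine ⟨htqmem, ?_⟩
    rw [div_div_eq_mul_div, mul_comm, mul_div_assoc, div_self (ne_of_gt htq0), mul_one]
  · rintro t ⟨htmem, hle⟩
    by_contra h
    push_neg at h
    have hsplit : (∫ u in (0:ℝ)..tq, f u) + ∫ u in tq..t, f u = ∫ u in (0:ℝ)..t, f u :=
      intervalIntegral.integral_add_adjacent_intervals
        (hInt 0 tq (by norm_num) htqmem) (hInt tq t htqmem htmem)
    have hbound : (∫ u in tq..t, f u) ≤ (t - tq) * f tq := by
      have := intervalIntegral.integral_mono_on h.le (hInt tq t htqmem htmem)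
        intervalIntegrable_const
        (fun u hu => hmono htqmem ⟨le_trans htq0.le hu.1, le_trans hu.2 htmem.2⟩ hu.1)
      simpa using this
    have hFle : F t ≤ F tq + (t - tq) * f tq := by
      rw [hF t, hF tq, ← hsplit]; linarith
    have hle' : t * F tq ≤ F t * tq := by
      rw [div_div_eq_mul_div, mul_comm, mul_div_assoc] at hle
      calc t * F tq = (F tq * (t / tq)) * tq := by field_simp
        _ ≤ F t * tq := by
          exact mul_le_mul_of_nonneg_right hle htq0.le
    nlinarith [mul_pos (sub_pos.mpr h) (sub_pos.mpr hgt)]
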